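/- If dynamical realizations ρ_G and ρ_H of countable bi-ordered groups (G, <_G) and (H, <_H) merge, then the sets of critical points are disjoint: T_G ∩ T_H = ∅. -/

import Mathlib

/-- A bi-order on a group `G`: a strict linear order (irreflexive, transitive, total)
invariant under left and right multiplication. -/
structure IsBiOrder {G : Type*} [Group G] (r : G → G → Prop) : Prop where
  irrefl : ∀ x, ¬ r x x
  trans : ∀ x y z, r x y → r y z → r x z
  total : ∀ x y, x ≠ y → r x y ∨ r y x
  mul_left : ∀ x y z, r x y → r (z * x) (z * y)
  mul_right : ∀ x y z, r x y → r (x * z) (y * z)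

/-- The supremum of a set of reals, computed in the extended reals `[-∞, +∞]`
(so that `realSup ∅ = ⊥ = -∞`). -/
noncomputable def realSup (s : Set ℝ) : EReal :=
  sSup ((fun x : ℝ => (x : EReal)) '' s)

section DynamicalRealization

variable {G H : Type*} [Group G] [Group H]

/-- `ρ` is a dynamical realization of the bi-ordered group `(G, r)`:
a faithful action on `ℝ` by orientation-preserving homeomorphisms satisfying
(i) for `1 < g`, `sup {x | g x > x} > sup {x | g x < x}`;
(ii) if `hⁿ < g` for all `n : ℤ` then `sup {x | g x ≠ x} > sup {x | h x ≠ x}`;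
(iii) for `g ≠ 1` the critical point `t_g = sup {x | g x ≠ x}` is a real number;
(iv) for `g ≠ 1`, `ρ g` is not the identity on any nonempty open interval `(a, b)`
with `b < t_g`. -/
structure IsDynamicalRealization (r : G → G → Prop) (ρ : G →* (ℝ ≃o ℝ)) : Prop where
  inj : Function.Injective ρ
  pos_cond : ∀ g : G, r 1 g → realSup {x | ρ g x < x} < realSup {x | x < ρ g x}
  dom_cond : ∀ g h : G, (∀ n : ℤ, r (h ^ n) g) →
    realSup {x | ρ h x ≠ x} < realSup {x | ρ g x ≠ x}
  crit_real : ∀ g : G, g ≠ 1 → ∃ t : ℝ, realSup {x | ρ g x ≠ x} = (t : EReal)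
  no_local_id : ∀ g : G, g ≠ 1 → ∀ a b : ℝ, a < b →
    (b : EReal) < realSup {x | ρ g x ≠ x} → ∃ x : ℝ, a < x ∧ x < b ∧ ρ g x ≠ x

/-- The set `T_G` of critical points `t_g = sup {x | ρ g x ≠ x}`, `g ≠ 1`. -/
def critSet (ρ : G →* (ℝ ≃o ℝ)) : Set ℝ :=
  {t : ℝ | ∃ g : G, g ≠ 1 ∧ realSup {x | ρ g x ≠ x} = (t : EReal)}

/-- A letter (an element of `G` or of `H`) regarded as an element of the free product. -/
def letterEmb : G ⊕ H → Monoid.Coprod G H :=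
  Sum.elim (fun g => Monoid.Coprod.inl g) (fun h => Monoid.Coprod.inr h)

/-- `w = [f₁, f₂, …, fₙ]` is a normal form word: every letter is a nontrivial element of
its factor, and consecutive letters lie in different factors. -/
def IsNormalWord (w : List (G ⊕ H)) : Prop :=
  (∀ l ∈ w, Sum.elim (fun g : G => g ≠ 1) (fun h : H => h ≠ 1) l) ∧
    w.Chain' (fun a b => a.isLeft ≠ b.isLeft)

/-- The element `fₙ ⋯ f₂ f₁` of the free product represented by the word
`w = [f₁, f₂, …, fₙ]` (the letter `f₁` acts first). -/
def wordProd (w : List (G ⊕ H)) : Monoid.Coprod G H :=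
  ((w.map letterEmb).reverse).prod

/-- The word `w = [f₁, …, fₙ]` is `x`-reduced with respect to the action `ρF`:
for every `k`, `t_{f_k} ≥ ρF (f_{k-1} ⋯ f₁) x`. -/
def XReduced (ρF : Monoid.Coprod G H →* (ℝ ≃o ℝ)) (x : ℝ) (w : List (G ⊕ H)) : Prop :=
  ∀ (k : ℕ) (hk : k < w.length),
    ((ρF (wordProd (w.take k)) x : ℝ) : EReal) ≤
      realSup {y | ρF (letterEmb (w.get ⟨k, hk⟩)) y ≠ y}

/-- The realizations `ρG` and `ρH` merge: for every `x ∈ T_G ∪ T_H` and every `x`-reduced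
normal word `w` over `G ∗ H` whose product fixes `x`, either `x ∈ T_G` and the product
lies in the factor `G`, or `x ∈ T_H` and the product lies in the factor `H`. -/
def Merges (ρG : G →* (ℝ ≃o ℝ)) (ρH : H →* (ℝ ≃o ℝ)) : Prop :=
  ∀ x ∈ critSet ρG ∪ critSet ρH, ∀ w : List (G ⊕ H), IsNormalWord w →
    XReduced (Monoid.Coprod.lift ρG ρH) x w →
    (Monoid.Coprod.lift ρG ρH) (wordProd w) x = x →
    (x ∈ critSet ρG ∧ ∃ g : G, wordProd w = Monoid.Coprod.inl g) ∨
    (x ∈ critSet ρH ∧ ∃ h : H, wordProd w = Monoid.Coprod.inr h)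

end DynamicalRealization


open Monoid.Coprod in
lemma fix_of_realSup_eq (f : ℝ ≃o ℝ) (x : ℝ)
    (hf : realSup {y | f y ≠ y} = (x : EReal)) : f x = x := by
  have key : ∀ y : ℝ, x < y → f y = y := by
    intro y hy
    by_contra hne
    have : ((y : ℝ) : EReal) ≤ realSup {y | f y ≠ y} :=
      le_sSup ⟨y, hne, rfl⟩
    rw [hf] at this
    exact absurd (EReal.coe_le_coe_iff.mp this) (not_le.mpr hy)
  rcases lt_trichotomy (f x) x with hlt | heq | hgt
  · have hx' : x < f.symm x := by
      have := f.symm.strictMono hlt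
      simpa using this
    set y := (x + f.symm x) / 2 with hy
    have h1 : x < y := by simp [hy]; linarith
    have h2 : y < f.symm x := by simp [hy]; linarith
    have hfy : f y = y := key y h1
    have : f.symm y = y := by
      conv_lhs => rw [← hfy]
      simp
    have hmono := f.symm.strictMono h1
    rw [this] at hmono
    exact absurd h2 (not_lt.mpr hmono.le)
  · exact heq
  · set y := (x + f x) / 2 with hy
    have h1 : x < y := by simp [hy]; linarith
    have h2 : y < f x := by simp [hy]; linarith
    have hfy : f y = y := key y h1
    have := f.strictMono h1
    rw [hfy] at this
    exact absurd h2 (not_lt.mpr this.le)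

/-- If dynamical realizations of countable bi-ordered groups merge, then their sets of
critical points are disjoint. -/
theorem merges_critSets_disjoint
    {G H : Type*} [Group G] [Group H] [Countable G] [Countable H]
    (rG : G → G → Prop) (rH : H → H → Prop)
    (hrG : IsBiOrder rG) (hrH : IsBiOrder rH)
    (ρG : G →* (ℝ ≃o ℝ)) (ρH : H →* (ℝ ≃o ℝ))
    (hG : IsDynamicalRealization rG ρG) (hH : IsDynamicalRealization rH ρH)
    (hm : Merges ρG ρH) :
    critSet ρG ∩ critSet ρH = ∅ := by
  ext x
  simp only [Set.mem_inter_iff, Set.mem_empty_iff_false, iff_false]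
  rintro ⟨hxG, hxH⟩
  obtain ⟨g, hg1, hgsup⟩ := hxG
  obtain ⟨h, hh1, hhsup⟩ := hxH
  have hgx : ρG g x = x := fix_of_realSup_eq (ρG g) x hgsup
  have hhx : ρH h x = x := fix_of_realSup_eq (ρH h) x hhsup
  set ρF := Monoid.Coprod.lift ρG ρH with hρF
  set w : List (G ⊕ H) := [Sum.inl g, Sum.inr h] with hw
  have hmem : x ∈ critSet ρG ∪ critSet ρH := Or.inl ⟨g, hg1, hgsup⟩
  have hnorm : IsNormalWord w := by
    constructor
    · intro l hl
      simp only [hw, List.mem_cons, List.mem_singleton, List.not_mem_nil, or_false] at hl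
      rcases hl with rfl | rfl
      · exact hg1
      · exact hh1
    · exact List.isChain_pair.mpr (by simp)
  have hwp1 : wordProd (w.take 1) = Monoid.Coprod.inl g := by
    simp [hw, wordProd, letterEmb]
  have hwp : wordProd w = Monoid.Coprod.inr h * Monoid.Coprod.inl g := by
    simp [hw, wordProd, letterEmb]
  have hred : XReduced ρF x w := by
    intro k hk
    simp only [hw, List.length_cons, List.length_nil] at hk
    interval_cases k
    · simp only [List.take_zero]
      have : wordProd ([] : List (G ⊕ H)) = 1 := by simp [wordProd]
      rw [this]
      simp only [map_one]
      have : ρF (letterEmb ((Sum.inl g : G ⊕ H))) = ρG g := by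
        simp [letterEmb, hρF]
      simpa [this, hw] using le_of_eq hgsup.symm
    · rw [hwp1]
      have h1 : ρF (Monoid.Coprod.inl g) = ρG g := by simp [hρF]
      have h2 : ρF (letterEmb ((Sum.inr h : G ⊕ H))) = ρH h := by
        simp [letterEmb, hρF]
      simp only [h1, hgx]
      simpa [h2, hw] using le_of_eq hhsup.symm
  have hfix : ρF (wordProd w) x = x := by
    rw [hwp, map_mul]
    have : (ρF (Monoid.Coprod.inr h) * ρF (Monoid.Coprod.inl g)) x
        = ρF (Monoid.Coprod.inr h) (ρF (Monoid.Coprod.inl g) x) := rfl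
    rw [this]
    simp [hρF, hgx, hhx]
  rcases hm x hmem w hnorm hred hfix with ⟨_, g', hg'⟩ | ⟨_, h', hh'⟩
  · have := congrArg (Monoid.Coprod.lift (1 : G →* H) (MonoidHom.id H)) (hwp ▸ hg')
    simp at this
    exact hh1 this
  · have := congrArg (Monoid.Coprod.lift (MonoidHom.id G) (1 : H →* G)) (hwp ▸ hh')
    simp at this
    exact hg1 this
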